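/- arXiv:1603.02221 — 2 statements merged into one kernel-verified Lean document; each statement's English description precedes it below -/
import Mathlib

section
/- On the five-point bowtie-plus-point poset P₄ (elements a, b, c, d, w with a < c, a < d, b < c, b < d, w < c, and a < w), the generator L₄ with L_{a,b} = L_{w,b} = L_{c,d} = L_{d,b} = L_{b,d} = 1 and all other off-diagonal entries 0 is monotone but not completely monotone. -/
open Finset
open scoped Classical

/-- The vector `W^{Γ,x,y}` from the paper, as a function of coordinates `(v,z)`. -/
noncomputable def Wvec {S : Type*} [PartialOrder S] (Γ : Finset S) (x y v z : S) : ℝ :=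
  if (x ≤ y ∧ y ∉ Γ ∧ v = y ∧ z ∈ Γ) ∨ (y ≤ x ∧ y ∈ Γ ∧ v = y ∧ z ∉ Γ) then 1
  else if (x ≤ y ∧ y ∉ Γ ∧ v = x ∧ z ∈ Γ) ∨ (y ≤ x ∧ y ∈ Γ ∧ v = x ∧ z ∉ Γ) then -1
  else 0

/-- The vector `I_f` from the paper: `(I_f)_{x,y} = 1` iff `f x = y`. -/
noncomputable def Ivec {S : Type*} (f : S → S) (x y : S) : ℝ := if f x = y then 1 else 0

/-- `Γ` is an up-set: upward closed. -/
def IsUpSet {S : Type*} [Preorder S] (Γ : Finset S) : Prop :=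
  ∀ a b : S, a ∈ Γ → a ≤ b → b ∈ Γ

/-- Euclidean inner product `⟨L, W^{Γ,x,y}⟩` over the off-diagonal coordinates `S₂`. -/
noncomputable def dotW {S : Type*} [Fintype S] [PartialOrder S]
    (L : S → S → ℝ) (Γ : Finset S) (x y : S) : ℝ :=
  ∑ p ∈ Finset.univ.filter (fun p : S × S => p.1 ≠ p.2), L p.1 p.2 * Wvec Γ x y p.1 p.2

/-- `L` is (the off-diagonal part of) a monotone generator. -/
def IsMonGen {S : Type*} [Fintype S] [PartialOrder S] (L : S → S → ℝ) : Prop :=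
  (∀ x y : S, x ≠ y → 0 ≤ L x y) ∧
    ∀ Γ : Finset S, IsUpSet Γ → ∀ x y : S, 0 ≤ dotW L Γ x y

/-- `L` is a completely monotone generator: a nonnegative combination of the `I_f`
over increasing maps `f`. -/
def IsCMonGen {S : Type*} [Fintype S] [PartialOrder S] (L : S → S → ℝ) : Prop :=
  ∃ Λ : (S → S) → ℝ, (∀ f, 0 ≤ Λ f) ∧ (∀ f, ¬ Monotone f → Λ f = 0) ∧
    ∀ x y : S, x ≠ y → L x y = ∑ f : S → S, Λ f * Ivec f x y

/-- The five-point poset `P₄`: bowtie `a,b < c,d` with extra element `w`, `a < w < c`. -/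
inductive P4 | a | b | c | d | w
  deriving DecidableEq

instance : Fintype P4 :=
  Fintype.ofList [.a, .b, .c, .d, .w] (fun x => by cases x <;> simp)

/-- Order on `P₄`: `a < c, a < d, b < c, b < d, w < c, a < w`. -/
def P4.ble : P4 → P4 → Bool
  | .a, .a | .a, .w | .a, .c | .a, .d => true
  | .b, .b | .b, .c | .b, .d => true
  | .w, .w | .w, .c => true
  | .c, .c => true
  | .d, .d => true
  | _, _ => false

instance : LE P4 := ⟨fun x y => P4.ble x y⟩
instance : DecidableRel (α := P4) (· ≤ ·) :=
  fun x y => inferInstanceAs (Decidable (P4.ble x y = true))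

instance : PartialOrder P4 where
  le_refl := by decide
  le_trans := by decide
  le_antisymm := by decide

/-- The generator `L₄` on `P₄`: rates `L_{a,b}=L_{w,b}=L_{c,d}=L_{d,b}=L_{b,d}=1`. -/
noncomputable def L4 : P4 → P4 → ℝ := fun x y =>
  if (x = .a ∧ y = .b) ∨ (x = .w ∧ y = .b) ∨ (x = .c ∧ y = .d) ∨
     (x = .d ∧ y = .b) ∨ (x = .b ∧ y = .d) then 1 else 0


-- Auxiliary material

instance (priority := high) P4.decIsUpSet (Γ : Finset P4) : Decidable (IsUpSet Γ) :=
  inferInstanceAs (Decidable (∀ a b : P4, a ∈ Γ → a ≤ b → b ∈ Γ))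

def L4Z : P4 → P4 → ℤ := fun x y =>
  if (x = .a ∧ y = .b) ∨ (x = .w ∧ y = .b) ∨ (x = .c ∧ y = .d) ∨
     (x = .d ∧ y = .b) ∨ (x = .b ∧ y = .d) then 1 else 0

def WZ (Γ : Finset P4) (x y v z : P4) : ℤ :=
  if (x ≤ y ∧ y ∉ Γ ∧ v = y ∧ z ∈ Γ) ∨ (y ≤ x ∧ y ∈ Γ ∧ v = y ∧ z ∉ Γ) then 1
  else if (x ≤ y ∧ y ∉ Γ ∧ v = x ∧ z ∈ Γ) ∨ (y ≤ x ∧ y ∈ Γ ∧ v = x ∧ z ∉ Γ) then -1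
  else 0

def S2 : Finset (P4 × P4) := Finset.univ.filter (fun p : P4 × P4 => p.1 ≠ p.2)

def dotWZ (Γ : Finset P4) (x y : P4) : ℤ :=
  ∑ p ∈ S2, L4Z p.1 p.2 * WZ Γ x y p.1 p.2

lemma L4_cast (x y : P4) : L4 x y = (L4Z x y : ℝ) := by
  unfold L4 L4Z; split_ifs <;> simp

lemma W_cast (Γ : Finset P4) (x y v z : P4) :
    Wvec Γ x y v z = (WZ Γ x y v z : ℝ) := by
  unfold Wvec WZ; split_ifs <;> simp

lemma dot_cast (Γ : Finset P4) (x y : P4) :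
    dotW L4 Γ x y = ((dotWZ Γ x y : ℤ) : ℝ) := by
  unfold dotW dotWZ
  push_cast
  refine Finset.sum_congr ?_ fun p _ => by rw [L4_cast, W_cast]
  ext p; simp [S2]

set_option maxRecDepth 10000 in
lemma dotWZ_nonneg : ∀ Γ : Finset P4, IsUpSet Γ → ∀ x y : P4, 0 ≤ dotWZ Γ x y := by
  decide

/-- The separating certificate. -/
def cZ : P4 → P4 → ℤ := fun x y =>
  if x = .a ∧ y = .b then 1
  else if x = .w ∧ y = .b then 0
  else if x = .c ∧ y = .d then 1
  else if x = .d ∧ y = .b then -1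
  else if x = .b ∧ y = .d then -2
  else 3

def dZ (x y : P4) : ℤ := if y = x then 0 else cZ x y

def phi5 (va vb vc vd vw : P4) : ℤ :=
  dZ .a va + dZ .b vb + dZ .c vc + dZ .d vd + dZ .w vw

set_option maxRecDepth 4000 in
lemma phi5_nonneg : ∀ va vb vc vd vw : P4, va ≤ vw → va ≤ vc → va ≤ vd →
    vb ≤ vc → vb ≤ vd → vw ≤ vc → 0 ≤ phi5 va vb vc vd vw := by decide

lemma sum_P4 {M : Type*} [AddCommMonoid M] (g : P4 → M) :
    ∑ x : P4, g x = g .a + g .b + g .c + g .d + g .w := by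
  show Multiset.sum _ = _
  simp [Finset.univ, Fintype.elems, Fintype.ofList, add_assoc]

lemma inner_row (f : P4 → P4) (x : P4) :
    (∑ y : P4, if x ≠ y then (cZ x y : ℝ) * Ivec f x y else 0) = ((dZ x (f x) : ℤ) : ℝ) := by
  rw [sum_P4]
  rcases hfx : f x with _ | _ | _ | _ | _ <;> cases x <;>
    simp [Ivec, dZ, cZ, hfx]

lemma inner_eq (f : P4 → P4) :
    (∑ p ∈ S2, (cZ p.1 p.2 : ℝ) * Ivec f p.1 p.2)
      = ((phi5 (f .a) (f .b) (f .c) (f .d) (f .w) : ℤ) : ℝ) := by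
  calc (∑ p ∈ S2, (cZ p.1 p.2 : ℝ) * Ivec f p.1 p.2)
      = ∑ p : P4 × P4, if p.1 ≠ p.2 then (cZ p.1 p.2 : ℝ) * Ivec f p.1 p.2 else 0 :=
        Finset.sum_filter _ _
    _ = ∑ x : P4, ∑ y : P4, if x ≠ y then (cZ x y : ℝ) * Ivec f x y else 0 := by
        rw [Fintype.sum_prod_type]
    _ = ∑ x : P4, ((dZ x (f x) : ℤ) : ℝ) :=
        Finset.sum_congr rfl fun x _ => inner_row f x
    _ = _ := by rw [sum_P4]; unfold phi5; push_cast; ring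

set_option maxRecDepth 4000 in
lemma TZ_val : (∑ p ∈ S2, cZ p.1 p.2 * L4Z p.1 p.2) = -1 := by decide

lemma phiL4 : (∑ p ∈ S2, (cZ p.1 p.2 : ℝ) * L4 p.1 p.2) = -1 := by
  calc (∑ p ∈ S2, (cZ p.1 p.2 : ℝ) * L4 p.1 p.2)
      = ((∑ p ∈ S2, cZ p.1 p.2 * L4Z p.1 p.2 : ℤ) : ℝ) := by
        push_cast
        exact Finset.sum_congr rfl fun p _ => by rw [L4_cast]
    _ = -1 := by rw [TZ_val]; norm_num

/-- `L₄` is monotone but not completely monotone on `P₄`. -/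
theorem L4_mon_not_cmon : IsMonGen L4 ∧ ¬ IsCMonGen L4 := by
  constructor
  · constructor
    · intro x y _
      unfold L4; split_ifs <;> norm_num
    · intro Γ hΓ x y
      rw [dot_cast]
      exact_mod_cast dotWZ_nonneg Γ hΓ x y
  · rintro ⟨Λ, hpos, hzero, hrep⟩
    have hrep' : ∀ x y : P4, x ≠ y → L4 x y = ∑ f : P4 → P4, Λ f * Ivec f x y := by
      intro x y h
      rw [hrep x y h]
      exact Finset.sum_congr (by congr 1; exact Subsingleton.elim _ _) fun _ _ => rfl
    have hT : (∑ p ∈ S2, (cZ p.1 p.2 : ℝ) * L4 p.1 p.2)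
        = ∑ f : P4 → P4, Λ f * ∑ p ∈ S2, (cZ p.1 p.2 : ℝ) * Ivec f p.1 p.2 := by
      calc (∑ p ∈ S2, (cZ p.1 p.2 : ℝ) * L4 p.1 p.2)
          = ∑ p ∈ S2, ∑ f : P4 → P4, (cZ p.1 p.2 : ℝ) * (Λ f * Ivec f p.1 p.2) := by
            refine Finset.sum_congr rfl fun p hp => ?_
            rw [hrep' p.1 p.2 (by simpa [S2] using hp), Finset.mul_sum]
        _ = ∑ f : P4 → P4, ∑ p ∈ S2, (cZ p.1 p.2 : ℝ) * (Λ f * Ivec f p.1 p.2) :=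
            Finset.sum_comm
        _ = ∑ f : P4 → P4, Λ f * ∑ p ∈ S2, (cZ p.1 p.2 : ℝ) * Ivec f p.1 p.2 := by
            refine Finset.sum_congr rfl fun f _ => ?_
            rw [Finset.mul_sum]
            exact Finset.sum_congr rfl fun p _ => by ring
    have hnn : 0 ≤ ∑ f : P4 → P4, Λ f * ∑ p ∈ S2, (cZ p.1 p.2 : ℝ) * Ivec f p.1 p.2 := by
      refine Finset.sum_nonneg fun f _ => ?_
      by_cases h0 : Λ f = 0
      · simp [h0]
      · have hmono : Monotone f := by
          by_contra hm
          exact h0 (hzero f hm)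
        refine mul_nonneg (hpos f) ?_
        rw [inner_eq]
        have := phi5_nonneg (f .a) (f .b) (f .c) (f .d) (f .w)
          (hmono (by decide : (P4.a : P4) ≤ P4.w)) (hmono (by decide : (P4.a : P4) ≤ P4.c))
          (hmono (by decide : (P4.a : P4) ≤ P4.d)) (hmono (by decide : (P4.b : P4) ≤ P4.c))
          (hmono (by decide : (P4.b : P4) ≤ P4.d)) (hmono (by decide : (P4.w : P4) ≤ P4.c))
        exact_mod_cast this
    rw [phiL4] at hT
    rw [← hT] at hnn
    linarith
end

section
/- On the five-point poset P₅ (bowtie a, b < c, d with a top element w above c and d), the generator L₅ with L_{w,c} = L_{w,d} = L_{c,a} = L_{d,a} = L_{b,a} = 1 and all other off-diagonal entries zero is monotone but not completely monotone. -/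
open Finset
open scoped Classical

/-- The five-point poset `P₅`: bowtie `a,b < c,d` with a top element `w` above `c,d`. -/
inductive P5 | a | b | c | d | w
  deriving DecidableEq

instance : Fintype P5 := ⟨{.a, .b, .c, .d, .w}, by intro x; cases x <;> simp⟩

/-- Order on `P₅`: `a < c, a < d, b < c, b < d, c < w, d < w`. -/
def P5.ble : P5 → P5 → Bool
  | .a, .a | .a, .c | .a, .d | .a, .w => true
  | .b, .b | .b, .c | .b, .d | .b, .w => true
  | .c, .c | .c, .w => true
  | .d, .d | .d, .w => true
  | .w, .w => true
  | _, _ => false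

instance : LE P5 := ⟨fun x y => P5.ble x y⟩
instance : DecidableRel (α := P5) (· ≤ ·) :=
  fun x y => inferInstanceAs (Decidable (P5.ble x y = true))

instance : PartialOrder P5 where
  le_refl := by decide
  le_trans := by decide
  le_antisymm := by decide

/-- The generator `L₅` on `P₅`: rates `L_{w,c}=L_{w,d}=L_{c,a}=L_{d,a}=L_{b,a}=1`. -/
noncomputable def L5 : P5 → P5 → ℝ := fun x y =>
  if (x = .w ∧ y = .c) ∨ (x = .w ∧ y = .d) ∨ (x = .c ∧ y = .a) ∨
     (x = .d ∧ y = .a) ∨ (x = .b ∧ y = .a) then 1 else 0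

set_option linter.constructorNameAsVariable false in
lemma univ_P5 : (univ : Finset P5) = {P5.a, P5.b, P5.c, P5.d, P5.w} := by decide

lemma sum_P5 (g : P5 → ℝ) : ∑ v, g v = g .a + g .b + g .c + g .d + g .w := by
  rw [univ_P5]; simp [Finset.sum_insert, Finset.mem_insert]; ring

lemma le_def (x y : P5) : (x ≤ y) = (P5.ble x y = true) := rfl

lemma dotW_eq (L : P5 → P5 → ℝ) (Γ : Finset P5) (x y : P5) :
    dotW L Γ x y = ∑ v : P5, ∑ z : P5,
      if v = z then 0 else L v z * Wvec Γ x y v z := by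
  rw [dotW, Finset.sum_filter, Fintype.sum_prod_type]
  congr 1; ext v; congr 1; ext z
  by_cases h : v = z <;> simp [h]

instance instDecUpSet (Γ : Finset P5) : Decidable (IsUpSet Γ) :=
  inferInstanceAs (Decidable (∀ x y : P5, x ∈ Γ → x ≤ y → y ∈ Γ))

lemma upsets (Γ : Finset P5) (h : IsUpSet Γ) :
    Γ = ∅ ∨ Γ = {P5.w} ∨ Γ = {P5.c, P5.w} ∨ Γ = {P5.d, P5.w} ∨ Γ = {P5.c, P5.d, P5.w} ∨
    Γ = {P5.a, P5.c, P5.d, P5.w} ∨ Γ = {P5.b, P5.c, P5.d, P5.w} ∨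
    Γ = {P5.a, P5.b, P5.c, P5.d, P5.w} := by
  revert h; revert Γ; decide

set_option maxHeartbeats 1000000 in
/-- `L₅` is monotone but not completely monotone on `P₅`. -/
theorem L5_mon_not_cmon : IsMonGen L5 ∧ ¬ IsCMonGen L5 := by
  constructor
  · constructor
    · intro x y _; unfold L5; split <;> norm_num
    · intro Γ hΓ x y
      rcases upsets Γ hΓ with h|h|h|h|h|h|h|h <;> subst h <;>
        fin_cases x <;> fin_cases y <;>
          simp [dotW_eq, sum_P5, Wvec, L5, le_def, P5.ble]
  · rintro ⟨Λ, hpos, hmono, h₀⟩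
    have h : ∀ x y : P5, x ≠ y → L5 x y = ∑ f : P5 → P5, Λ f * Ivec f x y := by
      intro x y hxy
      rw [h₀ x y hxy]
      congr!
    have hInn : ∀ (f : P5 → P5) (x y : P5), 0 ≤ Λ f * Ivec f x y := by
      intro f x y
      apply mul_nonneg (hpos f)
      unfold Ivec; split <;> norm_num
    have hz : ∀ (f : P5 → P5) (x y : P5), x ≠ y → L5 x y = 0 → f x = y → Λ f = 0 := by
      intro f x y hxy hL hf
      have h0 := h x y hxy
      rw [hL] at h0
      have := (Finset.sum_eq_zero_iff_of_nonneg (fun g _ => hInn g x y)).mp h0.symm f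
        (Finset.mem_univ f)
      rwa [Ivec, if_pos hf, mul_one] at this
    have key : ∀ f : P5 → P5,
        Λ f * Ivec f .w .c + Λ f * Ivec f .w .d ≤ Λ f * Ivec f .b .a := by
      intro f
      by_cases h0 : Λ f = 0
      · simp [h0]
      by_cases hm : Monotone f
      swap
      · exact absurd (hmono f hm) h0
      -- helper: f b = a in the two relevant cases
      have hba : ∀ t : P5, f .w = t → (t = P5.c ∨ t = P5.d) → f .b = .a := by
        intro t hw ht
        have hdw : f .d ≤ f .w := hm (by decide)
        have hcw : f .c ≤ f .w := hm (by decide)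
        rcases ht with ht | ht <;> subst ht
        · -- f w = c, show f d = a then f b = a
          have hda : f .d = .a := by
            cases hfd : f .d
            · rfl
            · exact absurd (hz f .d .b (by decide) (by simp [L5]) hfd) h0
            · exact absurd (hz f .d .c (by decide) (by simp [L5]) hfd) h0
            · rw [hfd, hw] at hdw; exact absurd hdw (by decide)
            · exact absurd (hz f .d .w (by decide) (by simp [L5]) hfd) h0
          have hbd : f .b ≤ f .d := hm (by decide)
          cases hfb : f .b
          · rfl
          · rw [hfb, hda] at hbd; exact absurd hbd (by decide)
          · exact absurd (hz f .b .c (by decide) (by simp [L5]) hfb) h0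
          · exact absurd (hz f .b .d (by decide) (by simp [L5]) hfb) h0
          · exact absurd (hz f .b .w (by decide) (by simp [L5]) hfb) h0
        · -- f w = d, show f c = a then f b = a
          have hca : f .c = .a := by
            cases hfc : f .c
            · rfl
            · exact absurd (hz f .c .b (by decide) (by simp [L5]) hfc) h0
            · rw [hfc, hw] at hcw; exact absurd hcw (by decide)
            · exact absurd (hz f .c .d (by decide) (by simp [L5]) hfc) h0
            · exact absurd (hz f .c .w (by decide) (by simp [L5]) hfc) h0
          have hbc : f .b ≤ f .c := hm (by decide)
          cases hfb : f .b
          · rfl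
          · rw [hfb, hca] at hbc; exact absurd hbc (by decide)
          · exact absurd (hz f .b .c (by decide) (by simp [L5]) hfb) h0
          · exact absurd (hz f .b .d (by decide) (by simp [L5]) hfb) h0
          · exact absurd (hz f .b .w (by decide) (by simp [L5]) hfb) h0
      cases hw : f .w
      · simpa [Ivec, hw] using hInn f .b .a
      · simpa [Ivec, hw] using hInn f .b .a
      · have := hba _ hw (Or.inl rfl)
        simp [Ivec, hw, this]
      · have := hba _ hw (Or.inr rfl)
        simp [Ivec, hw, this]
      · simpa [Ivec, hw] using hInn f .b .a
    have hsum := Finset.sum_le_sum (fun f _ => key f)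
      (s := (Finset.univ : Finset (P5 → P5)))
    rw [Finset.sum_add_distrib, ← h .w .c (by decide), ← h .w .d (by decide),
      ← h .b .a (by decide)] at hsum
    simp [L5] at hsum; linarith
end
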